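/- Let E, F be finite-dimensional subspaces of a Banach space X with E ⊆ F. Define ‖T‖_X = inf{‖T̃‖ : T̃ ∈ L(X,F), T̃|_E = T} for T ∈ L(E,F), and ‖S‖_{ΛX} = ν(i_{E,X}∘S) for S ∈ L(F,E), where ν is the nuclear norm of operators from F to X and i_{E,X} is the inclusion. Then for every T ∈ L(E,F), ‖T‖_X = sup{ tr(S∘T) : S ∈ L(F,E), ‖S‖_{ΛX} ≤ 1 }. -/

import Mathlib

set_option maxHeartbeats 1000000
set_option synthInstance.maxHeartbeats 400000


/-- The nuclear norm of a (finite-rank) operator, defined as the infimum of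
`∑ ‖fᵢ‖ * ‖xᵢ‖` over finite representations `A = ∑ fᵢ ⊗ xᵢ`. -/
noncomputable def nuclearNorm {F X : Type*} [NormedAddCommGroup F] [NormedSpace ℝ F]
    [NormedAddCommGroup X] [NormedSpace ℝ X] (A : F →L[ℝ] X) : ℝ :=
  sInf {c | ∃ (k : ℕ) (f : Fin k → (F →L[ℝ] ℝ)) (x : Fin k → X),
    (∀ v, A v = ∑ i, f i v • x i) ∧ c = ∑ i, ‖f i‖ * ‖x i‖}

namespace TraceDuality

lemma sInf_le_sInf_add_sInf {s t u : Set ℝ} (hs : s.Nonempty) (ht : t.Nonempty)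
    (hu : BddBelow u)
    (h : ∀ a ∈ s, ∀ b ∈ t, ∃ c ∈ u, c ≤ a + b) : sInf u ≤ sInf s + sInf t := by
  have key : ∀ a ∈ s, ∀ b ∈ t, sInf u ≤ a + b := by
    intro a ha b hb
    obtain ⟨c, hc, hcab⟩ := h a ha b hb
    exact (csInf_le hu hc).trans hcab
  have h1 : ∀ b ∈ t, sInf u - b ≤ sInf s := fun b hb =>
    le_csInf hs fun a ha => by linarith [key a ha b hb]
  have h2 : sInf u - sInf s ≤ sInf t :=
    le_csInf ht fun b hb => by linarith [h1 b hb]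
  linarith

lemma sInf_smul_eq {s t : Set ℝ} {c : ℝ} (hc : 0 < c) (hs : s.Nonempty)
    (hbs : BddBelow s) (hbt : BddBelow t)
    (hst : ∀ a ∈ s, c * a ∈ t) (hts : ∀ b ∈ t, c⁻¹ * b ∈ s) :
    sInf t = c * sInf s := by
  obtain ⟨a0, ha0⟩ := id hs
  have ht : t.Nonempty := ⟨c * a0, hst a0 ha0⟩
  have le1 : sInf t ≤ c * sInf s := by
    have : c⁻¹ * sInf t ≤ sInf s := le_csInf hs fun a ha => by
      have := csInf_le hbt (hst a ha)
      rw [inv_mul_le_iff₀ hc]; linarith [this]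
    calc sInf t = c * (c⁻¹ * sInf t) := by field_simp
      _ ≤ c * sInf s := by nlinarith [this]
  have le2 : c * sInf s ≤ sInf t := le_csInf ht fun b hb => by
    have h2 := mul_le_mul_of_nonneg_left (csInf_le hbs (hts b hb)) hc.le
    rwa [← mul_assoc, mul_inv_cancel₀ hc.ne', one_mul] at h2
  linarith

variable {G W X : Type*} [NormedAddCommGroup G] [NormedSpace ℝ G]
  [NormedAddCommGroup W] [NormedSpace ℝ W]
  [NormedAddCommGroup X] [NormedSpace ℝ X]

def repSet (A : G →L[ℝ] X) : Set ℝ :=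
  {c | ∃ (k : ℕ) (f : Fin k → (G →L[ℝ] ℝ)) (x : Fin k → X),
    (∀ v, A v = ∑ i, f i v • x i) ∧ c = ∑ i, ‖f i‖ * ‖x i‖}

lemma nuclearNorm_eq (A : G →L[ℝ] X) : nuclearNorm A = sInf (repSet A) := rfl

lemma repSet_nonneg {A : G →L[ℝ] X} {c : ℝ} (hc : c ∈ repSet A) : 0 ≤ c := by
  obtain ⟨k, f, x, -, rfl⟩ := hc
  exact Finset.sum_nonneg fun i _ => mul_nonneg (norm_nonneg _) (norm_nonneg _)

lemma bddBelow_repSet (A : G →L[ℝ] X) : BddBelow (repSet A) :=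
  ⟨0, fun _ hc => repSet_nonneg hc⟩

lemma nuclearNorm_le_of_mem {A : G →L[ℝ] X} {c : ℝ} (hc : c ∈ repSet A) :
    nuclearNorm A ≤ c :=
  csInf_le (bddBelow_repSet A) hc

lemma repSet_add {A B : G →L[ℝ] X} {a c : ℝ} (ha : a ∈ repSet A) (hc : c ∈ repSet B) :
    a + c ∈ repSet (A + B) := by
  obtain ⟨k, f, x, hfx, rfl⟩ := ha
  obtain ⟨l, g, y, hgy, rfl⟩ := hc
  refine ⟨k + l, Fin.append f g, Fin.append x y, fun v => ?_, ?_⟩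
  · rw [Fin.sum_univ_add]
    simp only [Fin.append_left, Fin.append_right, ContinuousLinearMap.add_apply]
    rw [hfx v, hgy v]
  · rw [Fin.sum_univ_add]
    simp [Fin.append_left, Fin.append_right]

lemma repSet_smul {A : G →L[ℝ] X} {a : ℝ} {c : ℝ} (hc : 0 ≤ c) (ha : a ∈ repSet A) :
    c * a ∈ repSet (c • A) := by
  obtain ⟨k, f, x, hfx, rfl⟩ := ha
  refine ⟨k, f, fun i => c • x i, fun v => ?_, ?_⟩
  · simp only [ContinuousLinearMap.smul_apply, hfx v, Finset.smul_sum]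
    exact Finset.sum_congr rfl fun i _ => (smul_comm _ _ _)
  · rw [Finset.mul_sum]
    refine Finset.sum_congr rfl fun i _ => ?_
    rw [norm_smul, Real.norm_of_nonneg hc]; ring

lemma repSet_neg {A : G →L[ℝ] X} {a : ℝ} (ha : a ∈ repSet A) : a ∈ repSet (-A) := by
  obtain ⟨k, f, x, hfx, rfl⟩ := ha
  exact ⟨k, f, fun i => -x i, fun v => by simp [hfx v], by simp⟩

lemma zero_mem_repSet : (0 : ℝ) ∈ repSet (0 : G →L[ℝ] X) :=
  ⟨0, ![], ![], fun v => by simp, by simp⟩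

lemma rankOne_mem_repSet (f : G →L[ℝ] ℝ) (x : X) :
    ‖f‖ * ‖x‖ ∈ repSet (f.smulRight x) :=
  ⟨1, ![f], ![x], fun v => by simp, by simp⟩

noncomputable def coordL [FiniteDimensional ℝ G] {ι : Type*} (b : Module.Basis ι ℝ G) (i : ι) :
    G →L[ℝ] ℝ :=
  LinearMap.toContinuousLinearMap (b.coord i)

lemma coordL_apply [FiniteDimensional ℝ G] {ι : Type*} (b : Module.Basis ι ℝ G) (i : ι) (v : G) :
    coordL b i v = b.repr v i := by
  simp [coordL, Module.Basis.coord_apply]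

lemma sum_coordL_smulRight [FiniteDimensional ℝ G] {ι : Type*} [Fintype ι] (b : Module.Basis ι ℝ G)
    (B : G →L[ℝ] X) : ∑ i, (coordL b i).smulRight (B (b i)) = B := by
  ext v
  simp only [ContinuousLinearMap.sum_apply, ContinuousLinearMap.smulRight_apply, coordL_apply]
  calc ∑ i, b.repr v i • B (b i) = B (∑ i, b.repr v i • b i) := by
        rw [map_sum]; simp only [map_smul]
    _ = B v := by rw [b.sum_repr v]

lemma repSet_nonempty [FiniteDimensional ℝ G] (A : G →L[ℝ] X) : (repSet A).Nonempty := by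
  classical
  set b := Module.finBasis ℝ G
  refine ⟨∑ i, ‖coordL b i‖ * ‖A (b i)‖, Module.finrank ℝ G, fun i => coordL b i,
    fun i => A (b i), fun v => ?_, rfl⟩
  conv_lhs => rw [← sum_coordL_smulRight b A]
  simp

lemma nuclearNorm_nonneg [FiniteDimensional ℝ G] (A : G →L[ℝ] X) : 0 ≤ nuclearNorm A :=
  le_csInf (repSet_nonempty A) fun _ hc => repSet_nonneg hc

lemma nuclearNorm_zero : nuclearNorm (0 : G →L[ℝ] X) = 0 :=
  le_antisymm (nuclearNorm_le_of_mem zero_mem_repSet)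
    (le_csInf ⟨0, zero_mem_repSet⟩ fun _ hc => repSet_nonneg hc)

lemma nuclearNorm_neg (A : G →L[ℝ] X) : nuclearNorm (-A) = nuclearNorm A := by
  rw [nuclearNorm_eq, nuclearNorm_eq]
  congr 1
  apply Set.Subset.antisymm
  · intro a ha
    have := repSet_neg (A := -A) ha
    rwa [neg_neg] at this
  · exact fun a ha => repSet_neg ha

lemma nuclearNorm_add_le [FiniteDimensional ℝ G] (A B : G →L[ℝ] X) :
    nuclearNorm (A + B) ≤ nuclearNorm A + nuclearNorm B := by
  rw [nuclearNorm_eq, nuclearNorm_eq, nuclearNorm_eq]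
  exact sInf_le_sInf_add_sInf (repSet_nonempty A) (repSet_nonempty B)
    (bddBelow_repSet _) fun a ha b hb => ⟨a + b, repSet_add ha hb, le_rfl⟩

lemma nuclearNorm_smul [FiniteDimensional ℝ G] {c : ℝ} (hc : 0 < c) (A : G →L[ℝ] X) :
    nuclearNorm (c • A) = c * nuclearNorm A := by
  rw [nuclearNorm_eq, nuclearNorm_eq]
  refine sInf_smul_eq hc (repSet_nonempty A) (bddBelow_repSet _) (bddBelow_repSet _)
    (fun a ha => repSet_smul hc.le ha) (fun b hb => ?_)
  have := repSet_smul (inv_nonneg.2 hc.le) (A := c • A) hb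
  rwa [smul_smul, inv_mul_cancel₀ hc.ne', one_smul] at this

lemma rankOne_nuclearNorm_le (f : G →L[ℝ] ℝ) (x : X) :
    nuclearNorm (f.smulRight x) ≤ ‖f‖ * ‖x‖ :=
  nuclearNorm_le_of_mem (rankOne_mem_repSet f x)

section Adj
variable [FiniteDimensional ℝ G]

lemma smulRight_add (f : G →L[ℝ] ℝ) (w₁ w₂ : W) :
    f.smulRight (w₁ + w₂) = f.smulRight w₁ + f.smulRight w₂ := by
  ext v; simp [smul_add]

lemma smulRight_smul (f : G →L[ℝ] ℝ) (c : ℝ) (w : W) :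
    f.smulRight (c • w) = c • f.smulRight w := by
  ext v
  simp only [ContinuousLinearMap.smulRight_apply, ContinuousLinearMap.smul_apply]
  rw [smul_comm]

/-- The "adjoint-like" map associated with a linear functional on operator space. -/
noncomputable def adj {ι : Type*} [Fintype ι] (b : Module.Basis ι ℝ G)
    (φ : (G →L[ℝ] W) →ₗ[ℝ] ℝ) : W →ₗ[ℝ] G where
  toFun w := ∑ i, φ ((coordL b i).smulRight w) • b i
  map_add' w₁ w₂ := by
    simp only [smulRight_add, map_add, add_smul, Finset.sum_add_distrib]
  map_smul' c w := by
    simp only [smulRight_smul, map_smul, RingHom.id_apply, Finset.smul_sum, smul_smul,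
      smul_eq_mul]

lemma adj_apply_dual {ι : Type*} [Fintype ι] (b : Module.Basis ι ℝ G)
    (φ : (G →L[ℝ] W) →ₗ[ℝ] ℝ) (g : G →L[ℝ] ℝ) (w : W) :
    g (adj b φ w) = φ (g.smulRight w) := by
  have hg : ∑ i, g (b i) • ((coordL b i).smulRight w) = g.smulRight w := by
    ext v
    simp only [ContinuousLinearMap.sum_apply, ContinuousLinearMap.smul_apply,
      ContinuousLinearMap.smulRight_apply, coordL_apply]
    have hgv : g v = ∑ i, b.repr v i * g (b i) := by
      conv_lhs => rw [← b.sum_repr v]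
      rw [map_sum]
      exact Finset.sum_congr rfl fun i _ => by rw [map_smul, smul_eq_mul]
    calc ∑ i, g (b i) • b.repr v i • w = (∑ i, b.repr v i * g (b i)) • w := by
          rw [Finset.sum_smul]
          exact Finset.sum_congr rfl fun i _ => by rw [smul_smul, mul_comm]
      _ = g v • w := by rw [← hgv]
  calc g (adj b φ w) = ∑ i, φ ((coordL b i).smulRight w) * g (b i) := by
        simp only [adj, LinearMap.coe_mk, AddHom.coe_mk, map_sum, map_smul, smul_eq_mul]
    _ = φ (∑ i, g (b i) • ((coordL b i).smulRight w)) := by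
        rw [map_sum]
        exact Finset.sum_congr rfl fun i _ => by rw [map_smul, smul_eq_mul, mul_comm]
    _ = φ (g.smulRight w) := by rw [hg]

end Adj

lemma trace_eq_sum_coord [FiniteDimensional ℝ G] {ι : Type*} [Fintype ι] [DecidableEq ι]
    (b : Module.Basis ι ℝ G) (B : G →ₗ[ℝ] G) :
    LinearMap.trace ℝ G B = ∑ i, b.repr (B (b i)) i := by
  rw [LinearMap.trace_eq_matrix_trace ℝ b, Matrix.trace]
  exact Finset.sum_congr rfl fun i _ => by
    rw [Matrix.diag_apply, LinearMap.toMatrix_apply]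

lemma trace_adj_comp [FiniteDimensional ℝ G] {ι : Type*} [Fintype ι] [DecidableEq ι]
    (b : Module.Basis ι ℝ G) (φ : (G →L[ℝ] W) →ₗ[ℝ] ℝ) (B : G →L[ℝ] W) :
    LinearMap.trace ℝ G ((adj b φ) ∘ₗ (B : G →ₗ[ℝ] W)) = φ B := by
  rw [trace_eq_sum_coord b]
  have h1 : ∀ i, b.repr ((adj b φ) (B (b i))) i = φ ((coordL b i).smulRight (B (b i))) :=
    fun i => by rw [← coordL_apply b i, adj_apply_dual]
  simp only [LinearMap.comp_apply, ContinuousLinearMap.coe_coe, h1]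
  rw [← map_sum, sum_coordL_smulRight]

lemma trace_smulRight' [FiniteDimensional ℝ G] (f : G →L[ℝ] ℝ) (y : G) :
    LinearMap.trace ℝ G ((f.smulRight y : G →L[ℝ] G) : G →ₗ[ℝ] G) = f y := by
  classical
  set b := Module.finBasis ℝ G
  rw [trace_eq_sum_coord b]
  simp only [ContinuousLinearMap.coe_coe, ContinuousLinearMap.smulRight_apply, map_smul,
    Finsupp.smul_apply, smul_eq_mul]
  have : ∀ i, f (b i) * b.repr y i = b.repr y i * f (b i) := fun i => mul_comm _ _
  rw [Finset.sum_congr rfl fun i _ => this i]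
  calc ∑ i, b.repr y i * f (b i) = f (∑ i, b.repr y i • b i) := by
        rw [map_sum]; exact Finset.sum_congr rfl fun i _ => by rw [map_smul, smul_eq_mul]
    _ = f y := by rw [b.sum_repr y]

/-- Hahn-Banach core: the nuclear norm is attained by tracing against a norm-one operator. -/
lemma core [FiniteDimensional ℝ G] (A : G →L[ℝ] X) :
    ∃ Tt : X →L[ℝ] G, ‖Tt‖ ≤ 1 ∧
      LinearMap.trace ℝ G ((Tt : X →ₗ[ℝ] G) ∘ₗ (A : G →ₗ[ℝ] X)) = nuclearNorm A := by
  classical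
  by_cases hA : A = 0
  · refine ⟨0, by simp, ?_⟩
    subst hA
    simp [nuclearNorm_zero]
  -- Hahn-Banach on the operator space
  obtain ⟨φ, hφ₁, hφ₂⟩ := exists_extension_of_le_sublinear
    (LinearPMap.mkSpanSingleton A (nuclearNorm A) hA) nuclearNorm
    (fun c hc A' => nuclearNorm_smul hc A') (fun A₁ A₂ => nuclearNorm_add_le A₁ A₂)
    (by
      rintro ⟨z, hz⟩
      obtain ⟨c, rfl⟩ := Submodule.mem_span_singleton.1 hz
      rw [LinearPMap.mkSpanSingleton'_apply]
      rcases lt_trichotomy c 0 with h | h | h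
      · have : c • nuclearNorm A ≤ 0 :=
          smul_nonpos_of_nonpos_of_nonneg h.le (nuclearNorm_nonneg A)
        exact this.trans (nuclearNorm_nonneg _)
      · subst h; simp [nuclearNorm_zero, nuclearNorm_nonneg]
      · rw [nuclearNorm_smul h A, smul_eq_mul, RingHom.id_apply])
  have hφA : φ A = nuclearNorm A := by
    have := hφ₁ ⟨A, Submodule.mem_span_singleton_self A⟩
    rwa [LinearPMap.mkSpanSingleton_apply] at this
  have habs : ∀ z : G →L[ℝ] X, |φ z| ≤ nuclearNorm z := by
    intro z
    rw [abs_le]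
    constructor
    · have := hφ₂ (-z)
      rw [map_neg, nuclearNorm_neg] at this
      linarith
    · exact hφ₂ z
  set b := Module.finBasis ℝ G with hb
  set L := adj b φ with hL
  have hbound : ∀ x : X, ‖L x‖ ≤ 1 * ‖x‖ := by
    intro x
    rw [one_mul]
    refine NormedSpace.norm_le_dual_bound ℝ (L x) (norm_nonneg x) fun g => ?_
    have h1 : g (L x) = φ (g.smulRight x) := adj_apply_dual b φ g x
    rw [Real.norm_eq_abs, h1]
    calc |φ (g.smulRight x)| ≤ nuclearNorm (g.smulRight x) := habs _
      _ ≤ ‖g‖ * ‖x‖ := rankOne_nuclearNorm_le g x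
      _ = ‖x‖ * ‖g‖ := mul_comm _ _
  refine ⟨L.mkContinuous 1 hbound, LinearMap.mkContinuous_norm_le L zero_le_one hbound, ?_⟩
  have hcoe : ((L.mkContinuous 1 hbound : X →L[ℝ] G) : X →ₗ[ℝ] G) = L := rfl
  rw [hcoe, hL, trace_adj_comp b φ A, hφA]

end TraceDuality
namespace TraceDuality

section Main

variable {Y : Type*} [NormedAddCommGroup Y] [NormedSpace ℝ Y]
  (E F : Submodule ℝ Y) [FiniteDimensional ℝ E] [FiniteDimensional ℝ F]

/-- The set of norms of extensions. -/
def extSet (T' : E →L[ℝ] F) : Set ℝ :=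
  {c | ∃ Tt : Y →L[ℝ] F, (∀ v : E, Tt (v : Y) = T' v) ∧ c = ‖Tt‖}

variable {E F}

lemma exists_extension (T' : E →L[ℝ] F) :
    ∃ Tt : Y →L[ℝ] F, ∀ v : E, Tt (v : Y) = T' v := by
  classical
  set b := Module.finBasis ℝ F with hb
  choose g hg _ using fun j => exists_extension_norm_eq E ((coordL b j).comp T')
  refine ⟨∑ j, (g j).smulRight (b j), fun v => ?_⟩
  simp only [ContinuousLinearMap.sum_apply, ContinuousLinearMap.smulRight_apply]
  have h1 : ∀ j, g j (v : Y) = coordL b j (T' v) := fun j => hg j v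
  simp only [h1, coordL_apply]
  exact b.sum_repr (T' v)

lemma opNorm_smul_eq {Z : Type*} [NormedAddCommGroup Z] [NormedSpace ℝ Z]
    {c : ℝ} (hc : 0 < c) (Tt : Y →L[ℝ] Z) : ‖c • Tt‖ = c * ‖Tt‖ := by
  have h1 := ContinuousLinearMap.opNorm_smul_le (𝕜' := ℝ) c Tt
  have h2 := ContinuousLinearMap.opNorm_smul_le (𝕜' := ℝ) c⁻¹ (c • Tt)
  rw [smul_smul, inv_mul_cancel₀ hc.ne', one_smul] at h2
  rw [Real.norm_eq_abs, abs_of_pos hc] at h1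
  rw [Real.norm_eq_abs, abs_of_pos (inv_pos.2 hc)] at h2
  have h3 := mul_le_mul_of_nonneg_left h2 hc.le
  rw [← mul_assoc, mul_inv_cancel₀ hc.ne', one_mul] at h3
  linarith

lemma extSet_nonempty (T' : E →L[ℝ] F) : (extSet E F T').Nonempty := by
  obtain ⟨Tt, hTt⟩ := exists_extension T'
  exact ⟨‖Tt‖, Tt, hTt, rfl⟩

lemma extSet_nonneg {T' : E →L[ℝ] F} {c : ℝ} (hc : c ∈ extSet E F T') : 0 ≤ c := by
  obtain ⟨Tt, -, rfl⟩ := hc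
  exact norm_nonneg Tt

lemma bddBelow_extSet (T' : E →L[ℝ] F) : BddBelow (extSet E F T') :=
  ⟨0, fun _ hc => extSet_nonneg hc⟩

/-- The extension seminorm. -/
noncomputable def alphaN (T' : E →L[ℝ] F) : ℝ := sInf (extSet E F T')

lemma alphaN_nonneg (T' : E →L[ℝ] F) : 0 ≤ alphaN T' :=
  le_csInf (extSet_nonempty T') fun _ hc => extSet_nonneg hc

lemma alphaN_le {T' : E →L[ℝ] F} {c : ℝ} (hc : c ∈ extSet E F T') : alphaN T' ≤ c :=
  csInf_le (bddBelow_extSet T') hc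

lemma alphaN_add_le (T₁ T₂ : E →L[ℝ] F) :
    alphaN (T₁ + T₂) ≤ alphaN T₁ + alphaN T₂ := by
  refine sInf_le_sInf_add_sInf (extSet_nonempty T₁) (extSet_nonempty T₂)
    (bddBelow_extSet _) ?_
  rintro a ⟨Tt₁, h₁, rfl⟩ b ⟨Tt₂, h₂, rfl⟩
  exact ⟨‖Tt₁ + Tt₂‖, ⟨Tt₁ + Tt₂, fun v => by simp [h₁ v, h₂ v], rfl⟩,
    by exact norm_add_le Tt₁ Tt₂⟩

lemma alphaN_smul {c : ℝ} (hc : 0 < c) (T' : E →L[ℝ] F) :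
    alphaN (c • T') = c * alphaN T' := by
  refine sInf_smul_eq hc (extSet_nonempty T') (bddBelow_extSet _) (bddBelow_extSet _) ?_ ?_
  · rintro a ⟨Tt, hTt, rfl⟩
    exact ⟨c • Tt, fun v => by simp [hTt v], (opNorm_smul_eq hc Tt).symm⟩
  · rintro a ⟨Tt, hTt, rfl⟩
    refine ⟨c⁻¹ • Tt, fun v => ?_, ?_⟩
    · have := hTt v
      simp only [ContinuousLinearMap.smul_apply] at this ⊢
      rw [this, smul_smul, inv_mul_cancel₀ hc.ne', one_smul]
    · exact (opNorm_smul_eq (inv_pos.2 hc) Tt).symm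

/-- Easy direction: every trace value is dominated by the norm of every extension. -/
lemma trace_le_norm_ext {T : E →L[ℝ] F} (S : F →L[ℝ] E)
    (hS : nuclearNorm (E.subtypeL.comp S) ≤ 1)
    (Tt : Y →L[ℝ] F) (hTt : ∀ v : E, Tt (v : Y) = T v) :
    LinearMap.trace ℝ E ((S.comp T : E →L[ℝ] E) : E →ₗ[ℝ] E) ≤ ‖Tt‖ := by
  classical
  refine le_of_forall_pos_le_add fun ε hε => ?_
  set N := ‖Tt‖ with hN
  have hN0 : 0 ≤ N := by exact norm_nonneg Tt
  have hδ : (0:ℝ) < ε / (N + 1) := by positivity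
  have hlt : sInf (repSet (E.subtypeL.comp S)) < 1 + ε / (N + 1) := by
    rw [← nuclearNorm_eq]; linarith
  obtain ⟨c, hcmem, hclt⟩ := exists_lt_of_csInf_lt (repSet_nonempty _) hlt
  obtain ⟨k, f, x, hfx, rfl⟩ := hcmem
  -- rewrite the trace
  have htr : LinearMap.trace ℝ E ((S.comp T : E →L[ℝ] E) : E →ₗ[ℝ] E)
      = ∑ i, f i (Tt (x i)) := by
    rw [ContinuousLinearMap.toLinearMap_comp, LinearMap.trace_comp_comm']
    have hTS : ((T : E →ₗ[ℝ] F) ∘ₗ (S : F →ₗ[ℝ] E))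
        = ∑ i, (((f i).smulRight (Tt (x i)) : F →L[ℝ] F) : F →ₗ[ℝ] F) := by
      apply LinearMap.ext
      intro v
      have h1 : ((S v : E) : Y) = ∑ i, f i v • x i := hfx v
      have h2 : T (S v) = Tt ((S v : E) : Y) := (hTt (S v)).symm
      simp only [LinearMap.comp_apply, ContinuousLinearMap.coe_coe, LinearMap.sum_apply,
        ContinuousLinearMap.smulRight_apply]
      rw [h2, h1, map_sum]
      exact Finset.sum_congr rfl fun i _ => by rw [map_smul]
    rw [hTS, map_sum]
    exact Finset.sum_congr rfl fun i _ => trace_smulRight' (f i) (Tt (x i))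
  rw [htr]
  have hterm : ∀ i, f i (Tt (x i)) ≤ ‖f i‖ * ‖x i‖ * N := by
    intro i
    calc f i (Tt (x i)) ≤ |f i (Tt (x i))| := le_abs_self _
      _ = ‖f i (Tt (x i))‖ := (Real.norm_eq_abs _).symm
      _ ≤ ‖f i‖ * ‖Tt (x i)‖ := by exact (f i).le_opNorm _
      _ ≤ ‖f i‖ * (N * ‖x i‖) := by
          exact mul_le_mul_of_nonneg_left (Tt.le_opNorm _) (norm_nonneg (f i))
      _ = ‖f i‖ * ‖x i‖ * N := by ring
  calc ∑ i, f i (Tt (x i)) ≤ ∑ i, ‖f i‖ * ‖x i‖ * N :=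
        Finset.sum_le_sum fun i _ => hterm i
    _ = (∑ i, ‖f i‖ * ‖x i‖) * N := by rw [Finset.sum_mul]
    _ ≤ (1 + ε / (N + 1)) * N := by
        apply mul_le_mul_of_nonneg_right hclt.le hN0
    _ ≤ N + ε := by
        have h3 : N * (ε / (N + 1)) ≤ ε := by
          rw [mul_div_assoc'] at *
          rw [div_le_iff₀ (by linarith : (0:ℝ) < N + 1)]
          nlinarith
        nlinarith

end Main

end TraceDuality

open TraceDuality in
theorem stmt_9 (X : Type*) [NormedAddCommGroup X] [NormedSpace ℝ X] [CompleteSpace X]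
    (E F : Submodule ℝ X) [FiniteDimensional ℝ E] [FiniteDimensional ℝ F]
    (hEF : E ≤ F) (T : E →L[ℝ] F) :
    sInf {c | ∃ Tt : X →L[ℝ] F, (∀ v : E, Tt (v : X) = T v) ∧ c = ‖Tt‖}
      = sSup {t | ∃ S : F →L[ℝ] E,
          nuclearNorm (E.subtypeL.comp S) ≤ 1 ∧
          t = LinearMap.trace ℝ E ((S.comp T : E →L[ℝ] E) : E →ₗ[ℝ] E)} := by
  classical
  set rhsSet : Set ℝ := {t | ∃ S : F →L[ℝ] E,
      nuclearNorm (E.subtypeL.comp S) ≤ 1 ∧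
      t = LinearMap.trace ℝ E ((S.comp T : E →L[ℝ] E) : E →ₗ[ℝ] E)} with hrhs
  show sInf (extSet E F T) = sSup rhsSet
  -- basic facts about the right hand set
  have hrhs_ne : rhsSet.Nonempty := by
    refine ⟨0, 0, ?_, ?_⟩
    · rw [ContinuousLinearMap.comp_zero, nuclearNorm_zero]; norm_num
    · rw [ContinuousLinearMap.zero_comp]; simp
  have hrhs_ub : ∀ c ∈ extSet E F T, ∀ t ∈ rhsSet, t ≤ c := by
    rintro c ⟨Tt, hTt, rfl⟩ t ⟨S, hS, rfl⟩
    exact trace_le_norm_ext S hS Tt hTt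
  obtain ⟨n₀, hn₀⟩ := extSet_nonempty T
  have hrhs_bdd : BddAbove rhsSet :=
    ⟨n₀, fun t ht => hrhs_ub n₀ hn₀ t ht⟩
  -- one inequality
  have hge : sSup rhsSet ≤ sInf (extSet E F T) :=
    le_csInf (extSet_nonempty T) fun c hc => csSup_le hrhs_ne fun t ht => hrhs_ub c hc t ht
  -- the hard inequality
  have hle : sInf (extSet E F T) ≤ sSup rhsSet := by
    by_cases hT : T = 0
    · subst hT
      have h0 : (0:ℝ) ∈ extSet E F (0 : E →L[ℝ] F) :=
        ⟨0, fun v => by simp, by exact ContinuousLinearMap.opNorm_zero.symm⟩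
      have : sInf (extSet E F (0 : E →L[ℝ] F)) ≤ 0 := alphaN_le h0
      refine this.trans ?_
      obtain ⟨t₀, ht₀⟩ := hrhs_ne
      refine le_csSup_of_le hrhs_bdd ?_ le_rfl
      refine ⟨0, ?_, ?_⟩
      · rw [ContinuousLinearMap.comp_zero, nuclearNorm_zero]; norm_num
      · rw [ContinuousLinearMap.zero_comp]; simp
    · -- Hahn-Banach for the extension seminorm
      obtain ⟨ψ, hψ₁, hψ₂⟩ := exists_extension_of_le_sublinear
        (LinearPMap.mkSpanSingleton T (alphaN T) hT) alphaN
        (fun c hc T' => alphaN_smul hc T') (fun T₁ T₂ => alphaN_add_le T₁ T₂)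
        (by
          rintro ⟨z, hz⟩
          obtain ⟨c, rfl⟩ := Submodule.mem_span_singleton.1 hz
          rw [LinearPMap.mkSpanSingleton'_apply]
          rcases lt_trichotomy c 0 with h | h | h
          · have h1 : c • alphaN T ≤ 0 :=
              smul_nonpos_of_nonpos_of_nonneg h.le (alphaN_nonneg T)
            exact h1.trans (alphaN_nonneg _)
          · subst h; simpa using alphaN_nonneg (0 : E →L[ℝ] F)
          · rw [alphaN_smul h T, smul_eq_mul, RingHom.id_apply])
      have hψT : ψ T = alphaN T := by
        have := hψ₁ ⟨T, Submodule.mem_span_singleton_self T⟩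
        rwa [LinearPMap.mkSpanSingleton_apply] at this
      -- build S from ψ
      set bE := Module.finBasis ℝ E with hbE
      set S₀ := adj bE ψ with hS₀
      set S : F →L[ℝ] E := LinearMap.toContinuousLinearMap S₀ with hS
      have hScoe : (S : F →ₗ[ℝ] E) = S₀ := by
        apply LinearMap.ext
        intro v
        simp [hS]
      have hψtr : ∀ T' : E →L[ℝ] F,
          LinearMap.trace ℝ E ((S.comp T' : E →L[ℝ] E) : E →ₗ[ℝ] E) = ψ T' := by
        intro T'
        rw [ContinuousLinearMap.toLinearMap_comp, hScoe, hS₀, trace_adj_comp bE ψ T']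
      -- nuclear norm bound via the core lemma
      set A := E.subtypeL.comp S with hA
      obtain ⟨Tt', hTt'norm, hTt'tr⟩ := core A
      have hres : ∀ v : E, Tt' ((v : X)) = (Tt'.comp E.subtypeL) v := fun v => rfl
      have htr_eq : LinearMap.trace ℝ F ((Tt' : X →ₗ[ℝ] F) ∘ₗ (A : F →ₗ[ℝ] X))
          = LinearMap.trace ℝ E ((S.comp (Tt'.comp E.subtypeL) : E →L[ℝ] E) : E →ₗ[ℝ] E) := by
        have h1 : ((Tt' : X →ₗ[ℝ] F) ∘ₗ (A : F →ₗ[ℝ] X))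
            = (((Tt'.comp E.subtypeL) : E →L[ℝ] F) : E →ₗ[ℝ] F) ∘ₗ (S : F →ₗ[ℝ] E) := by
          apply LinearMap.ext
          intro v
          rfl
        rw [h1, LinearMap.trace_comp_comm' ((S : F →ₗ[ℝ] E))
          (((Tt'.comp E.subtypeL) : E →L[ℝ] F) : E →ₗ[ℝ] F), ← ContinuousLinearMap.toLinearMap_comp]
      have hnnA : nuclearNorm A ≤ 1 := by
        calc nuclearNorm A = LinearMap.trace ℝ F ((Tt' : X →ₗ[ℝ] F) ∘ₗ (A : F →ₗ[ℝ] X)) :=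
              hTt'tr.symm
          _ = LinearMap.trace ℝ E ((S.comp (Tt'.comp E.subtypeL) : E →L[ℝ] E) : E →ₗ[ℝ] E) :=
              htr_eq
          _ = ψ (Tt'.comp E.subtypeL) := hψtr _
          _ ≤ alphaN (Tt'.comp E.subtypeL) := hψ₂ _
          _ ≤ ‖Tt'‖ := alphaN_le ⟨Tt', hres, rfl⟩
          _ ≤ 1 := hTt'norm
      -- conclude
      have hmem : alphaN T ∈ rhsSet := ⟨S, hnnA, by rw [hψtr T, hψT]⟩
      exact le_csSup hrhs_bdd hmem
  linarith
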